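/- For σ_{m,n}(x,y) = x̄^m y^n exp((Li₂(-|x|²)+Li₂(-|y|²))/(2ℏ)) on ℂ², with the inner product ⟨σ₁,σ₂⟩ = ∫_{ℂ²} d²x d²y · σ̄₁σ₂ / (√(1+|x|²)√(1+|y|²)), the states σ_{m,n} are pairwise orthogonal (for (m,n) ≠ (m',n')) and have finite norm ‖σ_{m,n}‖² = A_m A_n, where A_m = 2π ∫₀^∞ t^m (1+t)^{-1/2} e^{Li₂(-t)/ℏ} dt < ∞. -/

import Mathlib

open Complex MeasureTheory
open scoped ENNReal

noncomputable section

/-- The real dilogarithm (for arguments `s ≤ 0`):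
`Li₂(s) = -∫₀^s log(1-τ)/τ dτ`. -/
def Li2 (s : ℝ) : ℝ := -∫ τ in (0:ℝ)..s, Real.log (1 - τ) / τ

/-- The polarized section `σ_{m,n}(x,y) = x̄^m y^n exp((Li₂(-|x|²)+Li₂(-|y|²))/(2ℏ))`. -/
def sg (ℏ : ℝ) (m n : ℕ) (p : ℂ × ℂ) : ℂ :=
  ((starRingEnd ℂ) p.1) ^ m * p.2 ^ n *
    Complex.exp (((Li2 (-(normSq p.1)) + Li2 (-(normSq p.2))) / (2 * ℏ) : ℝ))

/-- The weight `1/(√(1+|x|²)√(1+|y|²))`. -/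
def wt (p : ℂ × ℂ) : ℝ :=
  1 / (Real.sqrt (1 + normSq p.1) * Real.sqrt (1 + normSq p.2))

/-- The measure `d²x d²y` on `ℂ²`, where `d²x = dx dx̄/i` is twice Lebesgue measure. -/
def meas : Measure (ℂ × ℂ) := (4 : ℝ≥0∞) • (volume : Measure (ℂ × ℂ))

/-- The inner product `⟨σ_{m,n}, σ_{m',n'}⟩ = ∫_{ℂ²} d²x d²y σ̄σ'/(√(1+|x|²)√(1+|y|²))`. -/
def ip (ℏ : ℝ) (m n m' n' : ℕ) : ℂ :=
  ∫ p : ℂ × ℂ, (starRingEnd ℂ) (sg ℏ m n p) * sg ℏ m' n' p * (wt p : ℂ) ∂meas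

/-- `A_m = 2π ∫₀^∞ t^m (1+t)^{-1/2} e^{Li₂(-t)/ℏ} dt`. -/
def Acoef (ℏ : ℝ) (m : ℕ) : ℝ :=
  2 * Real.pi * ∫ t in Set.Ioi (0:ℝ), t ^ m / Real.sqrt (1 + t) * Real.exp (Li2 (-t) / ℏ)


open Set
open scoped Real

lemma li2_integrand_nonpos {τ : ℝ} (hτ : τ ≤ 0) : Real.log (1 - τ) / τ ≤ 0 := by
  rcases eq_or_lt_of_le hτ with rfl | h
  · simp
  · apply div_nonpos_of_nonneg_of_nonpos _ hτ
    apply Real.log_nonneg; linarith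

lemma li2_integrand_ge {τ : ℝ} (hτ : τ ≤ 0) : -1 ≤ Real.log (1 - τ) / τ := by
  rcases eq_or_lt_of_le hτ with rfl | h
  · simp
  · have h1 : Real.log (1 - τ) ≤ -τ := by
      have := Real.log_le_sub_one_of_pos (x := 1 - τ) (by linarith)
      linarith
    rw [le_div_iff_of_neg h]
    linarith

lemma li2_integrand_abs {τ : ℝ} (hτ : τ ≤ 0) : |Real.log (1 - τ) / τ| ≤ 1 := by
  rw [abs_le]
  exact ⟨li2_integrand_ge hτ, (li2_integrand_nonpos hτ).trans zero_le_one⟩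

lemma li2_integrand_measurable : Measurable (fun τ : ℝ => Real.log (1 - τ) / τ) :=
  (Real.measurable_log.comp (measurable_const.sub measurable_id)).div measurable_id

lemma li2_intervalIntegrable {s : ℝ} (hs : s ≤ 0) :
    IntervalIntegrable (fun τ : ℝ => Real.log (1 - τ) / τ) volume s 0 := by
  rw [intervalIntegrable_iff]
  apply Measure.integrableOn_of_bounded (M := 1)
  · simp [Set.uIoc, Real.volume_Ioc]
  · exact li2_integrand_measurable.aestronglyMeasurable
  · filter_upwards [ae_restrict_mem measurableSet_uIoc] with τ hτ
    rw [Real.norm_eq_abs]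
    apply li2_integrand_abs
    rw [uIoc_of_le hs] at hτ
    exact hτ.2

lemma li2_eq {s : ℝ} : Li2 s = ∫ τ in s..(0:ℝ), Real.log (1 - τ) / τ := by
  rw [Li2, intervalIntegral.integral_symm, neg_neg]

lemma div_le_div_of_neg {A B τ : ℝ} (h : A ≤ B) (hτ : τ < 0) : B / τ ≤ A / τ := by
  rw [div_eq_mul_inv, div_eq_mul_inv]
  exact mul_le_mul_of_nonpos_right h (inv_nonpos.2 hτ.le)

lemma li2_nonpos {s : ℝ} (hs : s ≤ 0) : Li2 s ≤ 0 := by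
  rw [li2_eq]
  calc ∫ τ in s..(0:ℝ), Real.log (1 - τ) / τ
      ≤ ∫ _ in s..(0:ℝ), (0:ℝ) := by
        apply intervalIntegral.integral_mono_on hs (li2_intervalIntegrable hs)
          intervalIntegrable_const
        exact fun τ hτ => li2_integrand_nonpos hτ.2
    _ = 0 := by simp

lemma li2_continuousOn : ContinuousOn Li2 (Iic (0:ℝ)) := by
  intro x hx
  have hx0 : x ≤ 0 := hx
  have hle : x - 1 ≤ 0 := by linarith
  have h1 : ContinuousOn (fun s => ∫ τ in (0:ℝ)..s, Real.log (1 - τ) / τ)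
      (uIcc (x - 1) 0) :=
    intervalIntegral.continuousOn_primitive_interval' (li2_intervalIntegrable hle)
      Set.right_mem_uIcc
  have h2 : ContinuousOn Li2 (uIcc (x - 1) 0) := h1.neg
  rw [uIcc_of_le hle] at h2
  have h3 : Icc (x - 1) 0 ∈ nhdsWithin x (Iic 0) := by
    apply mem_nhdsWithin.2
    exact ⟨Ioi (x - 1), isOpen_Ioi, by simp, by rintro y ⟨hy1, hy2⟩; exact ⟨le_of_lt hy1, hy2⟩⟩
  exact (h2.continuousWithinAt ⟨by linarith, hx0⟩).mono_of_mem_nhdsWithin h3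

lemma li2_upper {t : ℝ} (ht : 1 ≤ t) : Li2 (-t) ≤ -(Real.log t)^2 / 2 := by
  have ht0 : 0 < t := by linarith
  have hmono : IntervalIntegrable (fun τ : ℝ => Real.log (1 - τ) / τ) volume (-t) (-1) :=
    (li2_intervalIntegrable (by linarith : (-t:ℝ) ≤ 0)).mono_set (by
      rw [uIcc_of_le (by linarith : (-t:ℝ) ≤ 0), uIcc_of_le (by linarith : (-t:ℝ) ≤ -1)]
      exact Icc_subset_Icc le_rfl (by norm_num))
  have hcont : IntervalIntegrable (fun τ : ℝ => Real.log (-τ) / τ) volume (-t) (-1) := by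
    apply ContinuousOn.intervalIntegrable
    have hne : ∀ τ ∈ uIcc (-t) (-1:ℝ), τ ≠ 0 := by
      intro τ hτ
      rw [uIcc_of_le (by linarith)] at hτ
      exact ne_of_lt (lt_of_le_of_lt hτ.2 (by norm_num))
    exact (Real.continuousOn_log.comp continuous_neg.continuousOn
      (fun τ hτ => by simpa using neg_ne_zero.2 (hne τ hτ))).div continuousOn_id hne
  have key : ∫ τ in (-t)..(-1:ℝ), Real.log (-τ) / τ = -((Real.log t)^2 / 2) := by
    have hderiv : ∀ τ ∈ uIcc (-t) (-1:ℝ),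
        HasDerivAt (fun τ : ℝ => (Real.log (-τ))^2 / 2) (Real.log (-τ) / τ) τ := by
      intro τ hτ
      rw [uIcc_of_le (by linarith)] at hτ
      have hτ0 : τ < 0 := lt_of_le_of_lt hτ.2 (by norm_num)
      have h1 : HasDerivAt (fun τ : ℝ => Real.log (-τ)) (1/τ) τ := by
        have := (Real.hasDerivAt_log (by linarith : -τ ≠ 0)).comp τ (hasDerivAt_neg τ)
        refine this.congr_deriv ?_
        field_simp
      have := (h1.pow 2).div_const 2
      refine this.congr_deriv ?_
      field_simp
      ring
    rw [intervalIntegral.integral_eq_sub_of_hasDerivAt hderiv hcont]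
    rw [show ((-1:ℝ)) = -(1:ℝ) by norm_num]
    simp [Real.log_neg_eq_log]
  have hsplit : Li2 (-t) = (∫ τ in (-t)..(-1:ℝ), Real.log (1-τ) / τ)
      + ∫ τ in (-1:ℝ)..(0:ℝ), Real.log (1-τ) / τ := by
    rw [li2_eq,
      intervalIntegral.integral_add_adjacent_intervals hmono
        (li2_intervalIntegrable (by norm_num))]
  have h2 : (∫ τ in (-1:ℝ)..(0:ℝ), Real.log (1-τ) / τ) ≤ 0 := by
    calc (∫ τ in (-1:ℝ)..(0:ℝ), Real.log (1-τ) / τ) ≤ ∫ _ in (-1:ℝ)..(0:ℝ), (0:ℝ) := by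
          apply intervalIntegral.integral_mono_on (by norm_num)
            (li2_intervalIntegrable (by norm_num)) intervalIntegrable_const
          exact fun τ hτ => li2_integrand_nonpos hτ.2
      _ = 0 := by simp
  have h1 : (∫ τ in (-t)..(-1:ℝ), Real.log (1-τ) / τ) ≤ -((Real.log t)^2/2) := by
    rw [← key]
    apply intervalIntegral.integral_mono_on (by linarith) hmono hcont
    intro τ hτ
    have hτ0 : τ < 0 := lt_of_le_of_lt hτ.2 (by norm_num)
    exact div_le_div_of_neg (Real.log_le_log (by linarith) (by linarith)) hτ0
  rw [hsplit]
  linarith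


variable {ℏ : ℝ}

lemma li2_neg_continuousOn : ContinuousOn (fun t : ℝ => Li2 (-t)) (Ioi (0:ℝ)) :=
  li2_continuousOn.comp continuous_neg.continuousOn
    (fun t ht => by simpa using (le_of_lt (by simpa using ht : (0:ℝ) < t)))

lemma sqrt_one_add_ne {t : ℝ} (ht : 0 ≤ t) : Real.sqrt (1 + t) ≠ 0 := by
  positivity

lemma one_le_sqrt_one_add {t : ℝ} (ht : 0 ≤ t) : 1 ≤ Real.sqrt (1 + t) := by
  have := Real.sqrt_le_sqrt (by linarith : (1:ℝ) ≤ 1 + t)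
  rwa [Real.sqrt_one] at this

lemma radial_contOn (k : ℕ) :
    ContinuousOn (fun t : ℝ => t ^ k / Real.sqrt (1 + t) * Real.exp (Li2 (-t) / ℏ))
      (Ioi (0:ℝ)) := by
  apply ContinuousOn.mul
  · apply ContinuousOn.div (continuous_pow k).continuousOn
      (Real.continuous_sqrt.comp (continuous_const.add continuous_id)).continuousOn
    exact fun t ht => sqrt_one_add_ne (le_of_lt ht)
  · exact Real.continuous_exp.comp_continuousOn (li2_neg_continuousOn.div_const ℏ)

lemma radial_int (hℏ : 0 < ℏ) (k : ℕ) :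
    IntegrableOn (fun t : ℝ => t ^ k / Real.sqrt (1 + t) * Real.exp (Li2 (-t) / ℏ))
      (Set.Ioi (0:ℝ)) := by
  set g := fun t : ℝ => t ^ k / Real.sqrt (1 + t) * Real.exp (Li2 (-t) / ℏ) with hgdef
  set T : ℝ := max 1 (Real.exp (2 * ℏ * (k + 2))) with hT
  have hT1 : (1:ℝ) ≤ T := le_max_left _ _
  have hT0 : (0:ℝ) < T := by linarith
  have hgnonneg : ∀ t : ℝ, 0 < t → 0 ≤ g t := fun t ht =>
    mul_nonneg (div_nonneg (pow_nonneg ht.le _) (Real.sqrt_nonneg _)) (Real.exp_pos _).le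
  have hdivle : ∀ t : ℝ, 0 < t → t ^ k / Real.sqrt (1 + t) ≤ t ^ k := fun t ht =>
    div_le_self (pow_nonneg ht.le _) (one_le_sqrt_one_add ht.le)
  have hmeas : AEStronglyMeasurable g (volume.restrict (Ioi (0:ℝ))) :=
    (radial_contOn k).aestronglyMeasurable measurableSet_Ioi
  have h1 : IntegrableOn g (Ioc 0 T) := by
    apply Integrable.mono' (g := fun _ : ℝ => T ^ k)
      (integrableOn_const (by simp [Real.volume_Ioc]))
      (hmeas.mono_measure (Measure.restrict_mono Ioc_subset_Ioi_self le_rfl))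
    filter_upwards [ae_restrict_mem measurableSet_Ioc] with t ht
    rw [Real.norm_eq_abs, _root_.abs_of_nonneg (hgnonneg t ht.1)]
    · have e3 : Real.exp (Li2 (-t) / ℏ) ≤ 1 := by
        rw [← Real.exp_zero]
        exact Real.exp_le_exp.2
          (div_nonpos_of_nonpos_of_nonneg (li2_nonpos (by linarith [ht.1])) hℏ.le)
      calc g t ≤ t ^ k * 1 :=
            mul_le_mul (hdivle t ht.1) e3 (Real.exp_pos _).le (pow_nonneg ht.1.le _)
        _ = t ^ k := mul_one _
        _ ≤ T ^ k := pow_le_pow_left₀ ht.1.le ht.2 k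
  have h2 : IntegrableOn g (Ioi T) := by
    apply Integrable.mono' (g := fun t : ℝ => t ^ (-2 : ℝ))
      (integrableOn_Ioi_rpow_of_lt (by norm_num) hT0)
      (hmeas.mono_measure (Measure.restrict_mono (Ioi_subset_Ioi hT0.le) le_rfl))
    filter_upwards [ae_restrict_mem measurableSet_Ioi] with t ht
    have ht1 : (1:ℝ) < t := lt_of_le_of_lt hT1 ht
    have ht0 : (0:ℝ) < t := by linarith
    have hlogt : 2 * ℏ * (k + 2) ≤ Real.log t := by
      rw [← Real.log_exp (2 * ℏ * (k + 2))]
      exact Real.log_le_log (Real.exp_pos _) (le_of_lt (lt_of_le_of_lt (le_max_right _ _) ht))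
    have hlog0 : 0 ≤ Real.log t := Real.log_nonneg ht1.le
    have h4 : Li2 (-t) / ℏ ≤ -(((k:ℝ) + 2) * Real.log t) := by
      rw [div_le_iff₀ hℏ]
      have := li2_upper ht1.le
      nlinarith [this, hlogt, hlog0, hℏ]
    have h5 : Real.exp (Li2 (-t) / ℏ) ≤ t ^ (-((k:ℝ) + 2)) := by
      rw [Real.rpow_def_of_pos ht0]
      exact Real.exp_le_exp.2 (h4.trans_eq (by ring))
    rw [Real.norm_eq_abs, _root_.abs_of_nonneg (hgnonneg t ht0)]
    calc g t ≤ t ^ k * t ^ (-((k:ℝ) + 2)) :=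
          mul_le_mul (hdivle t ht0) h5 (Real.exp_pos _).le (pow_nonneg ht0.le _)
      _ = t ^ (-2:ℝ) := by
          rw [← Real.rpow_natCast t k, ← Real.rpow_add ht0]
          norm_num
  have : Ioi (0:ℝ) = Ioc 0 T ∪ Ioi T := (Ioc_union_Ioi_eq_Ioi hT0.le).symm
  rw [this]
  exact h1.union h2

set_option maxHeartbeats 1000000 in
theorem pc_real {E : Type*} [NormedAddCommGroup E]
    [NormedSpace ℝ E] (f : ℝ × ℝ → E) :
    IntegrableOn (fun p : ℝ × ℝ => p.1 • f (polarCoord.symm p)) polarCoord.target ↔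
      Integrable f := by
  set B : ℝ × ℝ → ℝ × ℝ →L[ℝ] ℝ × ℝ := fun p =>
    LinearMap.toContinuousLinearMap (Matrix.toLin (Module.Basis.finTwoProd ℝ) (Module.Basis.finTwoProd ℝ)
      !![Real.cos p.2, -p.1 * Real.sin p.2; Real.sin p.2, p.1 * Real.cos p.2]) with hB
  have A : ∀ p ∈ polarCoord.target, HasFDerivWithinAt polarCoord.symm (B p) polarCoord.target p :=
    fun p _ => (hasFDerivAt_polarCoord_symm p).hasFDerivWithinAt
  have B_det : ∀ p, (B p).det = p.1 := by
    intro p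
    conv_rhs => rw [← one_mul p.1, ← Real.cos_sq_add_sin_sq p.2]
    simp only [hB, neg_mul, LinearMap.det_toContinuousLinearMap, LinearMap.det_toLin,
      Matrix.det_fin_two_of, sub_neg_eq_add]
    ring
  have hinj : InjOn polarCoord.symm polarCoord.target := polarCoord.symm.injOn
  have h1 := (integrableOn_image_iff_integrableOn_abs_det_fderiv_smul volume
      polarCoord.open_target.measurableSet A hinj f).symm
  have h2 : IntegrableOn (fun p : ℝ × ℝ => p.1 • f (polarCoord.symm p)) polarCoord.target ↔
      IntegrableOn (fun p : ℝ × ℝ => |(B p).det| • f (polarCoord.symm p)) polarCoord.target := by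
    apply integrableOn_congr_fun _ polarCoord.open_target.measurableSet
    intro x hx
    simp only
    rw [B_det, abs_of_pos hx.1]
  rw [h2, h1, polarCoord.symm_image_target_eq_source, IntegrableOn,
    Measure.restrict_congr_set polarCoord_source_ae_eq_univ, Measure.restrict_univ]

theorem pc_complex {E : Type*} [NormedAddCommGroup E]
    [NormedSpace ℝ E] (f : ℂ → E) :
    IntegrableOn (fun p : ℝ × ℝ => p.1 • f (Complex.polarCoord.symm p)) polarCoord.target ↔
      Integrable f := by
  rw [← (Complex.volume_preserving_equiv_real_prod.symm).integrable_comp_emb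
    Complex.measurableEquivRealProd.symm.measurableEmbedding,
    ← pc_real]
  rfl


def hh (ℏ t : ℝ) : ℝ := Real.exp (Li2 (-t) / ℏ) / Real.sqrt (1 + t)

lemma hh_nonneg (ℏ t : ℝ) : 0 ≤ hh ℏ t := by
  unfold hh; positivity

lemma hh_comp_continuous {X : Type*} [TopologicalSpace X] {f : X → ℝ}
    (hf : Continuous f) (h : ∀ x, 0 ≤ f x) :
    Continuous (fun x => hh ℏ (f x)) := by
  unfold hh
  apply Continuous.div
  · exact Real.continuous_exp.comp
      ((li2_continuousOn.comp_continuous (continuous_neg.comp hf)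
        (fun x => by simpa using h x)).div_const ℏ)
  · exact Real.continuous_sqrt.comp (continuous_const.add hf)
  · exact fun x => sqrt_one_add_ne (h x)

lemma radial_int' (hℏ : 0 < ℏ) (k : ℕ) :
    IntegrableOn (fun t : ℝ => t ^ k * hh ℏ t) (Set.Ioi (0:ℝ)) := by
  apply (radial_int hℏ k).congr_fun _ measurableSet_Ioi
  intro t _
  unfold hh; ring

lemma radial_sq (hℏ : 0 < ℏ) (k : ℕ) :
    IntegrableOn (fun r : ℝ => r ^ (2 * k + 1) * hh ℏ (r ^ 2)) (Set.Ioi (0:ℝ)) := by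
  have h2 := (integrableOn_Ioi_comp_rpow_iff (fun t : ℝ => t ^ k * hh ℏ t)
    (p := 2) two_ne_zero).2 (radial_int' hℏ k)
  have h3 := h2.const_mul ((1:ℝ)/2)
  apply IntegrableOn.congr_fun h3 _ measurableSet_Ioi
  intro x hx
  have hx0 : (0:ℝ) < x := hx
  have e1 : x ^ ((2:ℝ) - 1) = x := by
    norm_num
  have e2 : x ^ (2:ℝ) = x ^ 2 := by
    rw [show (2:ℝ) = ((2:ℕ):ℝ) by norm_num, Real.rpow_natCast]
  simp only [smul_eq_mul, e1, e2]
  rw [show |(2:ℝ)| = 2 by norm_num]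
  rw [pow_add, pow_mul, pow_one]
  ring

lemma radial_val (hℏ : 0 < ℏ) (a : ℕ) :
    ∫ r in Ioi (0:ℝ), r ^ (2 * a + 1) * hh ℏ (r ^ 2)
      = (1/2) * ∫ t in Ioi (0:ℝ), t ^ a * hh ℏ t := by
  have h1 := integral_comp_rpow_Ioi (fun t : ℝ => t ^ a * hh ℏ t) (p := 2) two_ne_zero
  rw [← h1]
  have : ∀ x ∈ Ioi (0:ℝ), (|(2:ℝ)| * x ^ ((2:ℝ) - 1)) • ((x ^ (2:ℝ)) ^ a * hh ℏ (x ^ (2:ℝ)))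
      = 2 * (x ^ (2 * a + 1) * hh ℏ (x ^ 2)) := by
    intro x hx
    have e2 : x ^ (2:ℝ) = x ^ 2 := by
      rw [show (2:ℝ) = ((2:ℕ):ℝ) by norm_num, Real.rpow_natCast]
    have e1 : x ^ ((2:ℝ) - 1) = x := by norm_num
    simp only [smul_eq_mul, e1, e2]
    rw [show |(2:ℝ)| = 2 by norm_num, pow_add, pow_mul, pow_one]
    ring
  rw [setIntegral_congr_fun measurableSet_Ioi this, MeasureTheory.integral_const_mul]
  ring

def Fc (ℏ : ℝ) (a b : ℕ) (x : ℂ) : ℂ :=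
  x ^ a * ((starRingEnd ℂ) x) ^ b * ((hh ℏ (normSq x) : ℝ) : ℂ)

lemma polar_eq (a b : ℕ) (p : ℝ × ℝ) :
    p.1 • Fc ℏ a b (Complex.polarCoord.symm p)
      = ((p.1 : ℂ) ^ (a + b + 1) * ((hh ℏ (p.1 ^ 2) : ℝ) : ℂ))
        * (Complex.exp (p.2 * I) ^ a * Complex.exp (-(p.2 * I)) ^ b) := by
  obtain ⟨r, θ⟩ := p
  have hsymm : Complex.polarCoord.symm (r, θ) = (r : ℂ) * Complex.exp (θ * I) := by
    rw [Complex.polarCoord_symm_apply, Complex.exp_mul_I]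
    simp [Complex.ofReal_cos, Complex.ofReal_sin]
  rw [hsymm]
  unfold Fc
  have hconj : (starRingEnd ℂ) ((r : ℂ) * Complex.exp (θ * I))
      = (r : ℂ) * Complex.exp (-(θ * I)) := by
    rw [map_mul, Complex.conj_ofReal, ← Complex.exp_conj]
    congr 1
    simp [Complex.conj_ofReal]
  have hns : normSq ((r : ℂ) * Complex.exp (θ * I)) = r ^ 2 := by
    rw [Complex.normSq_mul, Complex.normSq_ofReal]
    have : ‖Complex.exp (θ * I)‖ = 1 := by
      rw [show ((θ:ℂ) * I) = ((θ:ℝ):ℂ) * I from rfl]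
      exact Complex.norm_exp_ofReal_mul_I θ
    rw [← Complex.sq_norm, this]
    ring
  rw [hconj, hns]
  rw [Complex.real_smul]
  rw [mul_pow, mul_pow]
  push_cast
  ring

lemma Fc_continuous (a b : ℕ) : Continuous (Fc ℏ a b) := by
  unfold Fc
  apply Continuous.mul
  · exact (continuous_pow a).mul ((Complex.continuous_conj).pow b)
  · exact Complex.continuous_ofReal.comp
      (hh_comp_continuous Complex.continuous_normSq (fun x => normSq_nonneg x))

lemma angular_continuous (a b : ℕ) :
    Continuous (fun θ : ℝ => Complex.exp (θ * I) ^ a * Complex.exp (-(θ * I)) ^ b) := by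
  apply Continuous.mul
  · exact (Complex.continuous_exp.comp (Complex.continuous_ofReal.mul continuous_const)).pow a
  · exact (Complex.continuous_exp.comp
      ((Complex.continuous_ofReal.mul continuous_const).neg)).pow b

lemma angular_norm (a b : ℕ) (θ : ℝ) :
    ‖Complex.exp (θ * I) ^ a * Complex.exp (-(θ * I)) ^ b‖ = 1 := by
  rw [norm_mul, norm_pow, norm_pow]
  have h1 : ‖Complex.exp (θ * I)‖ = 1 := by
    exact Complex.norm_exp_ofReal_mul_I θ
  have h2 : ‖Complex.exp (-(θ * I))‖ = 1 := by
    rw [Complex.norm_exp]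
    simp
  rw [h1, h2, one_pow, one_pow, mul_one]

lemma angular_integrable (a b : ℕ) :
    IntegrableOn (fun θ : ℝ => Complex.exp (θ * I) ^ a * Complex.exp (-(θ * I)) ^ b)
      (Ioo (-π) π) := by
  apply Measure.integrableOn_of_bounded (M := 1)
  · simp [Real.volume_Ioo]
  · exact (angular_continuous a b).aestronglyMeasurable
  · exact Filter.Eventually.of_forall (fun θ => le_of_eq (angular_norm a b θ))

lemma radial_c_integrable (hℏ : 0 < ℏ) (a b : ℕ) :
    IntegrableOn (fun r : ℝ => (r : ℂ) ^ (a + b + 1) * ((hh ℏ (r ^ 2) : ℝ) : ℂ))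
      (Ioi (0:ℝ)) := by
  set j := a + b with hj
  have hmaj : IntegrableOn (fun r : ℝ => r ^ (2 * j + 1) * hh ℏ (r ^ 2)
      + r ^ (2 * 0 + 1) * hh ℏ (r ^ 2)) (Ioi (0:ℝ)) :=
    (radial_sq hℏ j).add (radial_sq hℏ 0)
  apply Integrable.mono' hmaj
  · apply Continuous.aestronglyMeasurable
    exact ((Complex.continuous_ofReal.pow _).mul
      (Complex.continuous_ofReal.comp (hh_comp_continuous (continuous_pow 2)
        (fun x => sq_nonneg x))))
  · filter_upwards [ae_restrict_mem measurableSet_Ioi] with r hr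
    have hr0 : (0:ℝ) < r := hr
    rw [norm_mul, norm_pow, Complex.norm_real, Complex.norm_real,
      Real.norm_eq_abs, Real.norm_eq_abs, _root_.abs_of_nonneg hr0.le,
      _root_.abs_of_nonneg (hh_nonneg ℏ _)]
    have hpow : r ^ (j + 1) ≤ r ^ (2 * j + 1) + r ^ (2 * 0 + 1) := by
      have : r ^ j ≤ r ^ (2 * j) + 1 := by
        rcases le_or_gt r 1 with h | h
        · have := pow_le_one₀ hr0.le h (n := j)
          have h2 : 0 ≤ r ^ (2 * j) := pow_nonneg hr0.le _
          linarith
        · have := pow_le_pow_right₀ h.le (by omega : j ≤ 2 * j)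
          linarith
      calc r ^ (j + 1) = r ^ j * r := by ring
        _ ≤ (r ^ (2 * j) + 1) * r := by
            apply mul_le_mul_of_nonneg_right this hr0.le
        _ = r ^ (2 * j + 1) + r ^ (2 * 0 + 1) := by ring
    calc r ^ (j + 1) * hh ℏ (r ^ 2)
        ≤ (r ^ (2 * j + 1) + r ^ (2 * 0 + 1)) * hh ℏ (r ^ 2) :=
          mul_le_mul_of_nonneg_right hpow (hh_nonneg ℏ _)
      _ = r ^ (2 * j + 1) * hh ℏ (r ^ 2) + r ^ (2 * 0 + 1) * hh ℏ (r ^ 2) := by ring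

lemma Fc_integrable (hℏ : 0 < ℏ) (a b : ℕ) : Integrable (Fc ℏ a b) := by
  rw [← pc_complex]
  have heq : (fun p : ℝ × ℝ => p.1 • Fc ℏ a b (Complex.polarCoord.symm p))
      = fun p : ℝ × ℝ => ((p.1 : ℂ) ^ (a + b + 1) * ((hh ℏ (p.1 ^ 2) : ℝ) : ℂ))
          * (Complex.exp (p.2 * I) ^ a * Complex.exp (-(p.2 * I)) ^ b) :=
    funext (polar_eq a b)
  rw [heq]
  show Integrable _ (volume.restrict polarCoord.target)
  have htarget : polarCoord.target = Ioi (0:ℝ) ×ˢ Ioo (-π) π := rfl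
  rw [htarget, Measure.volume_eq_prod, ← Measure.prod_restrict]
  exact Integrable.mul_prod (radial_c_integrable hℏ a b) (angular_integrable a b)


lemma angular_val (a b : ℕ) :
    (∫ θ in Ioo (-π) π, Complex.exp (θ * I) ^ a * Complex.exp (-(θ * I)) ^ b)
      = if a = b then (((2 * π : ℝ)) : ℂ) else 0 := by
  have hrw : ∀ θ : ℝ, Complex.exp (θ * I) ^ a * Complex.exp (-(θ * I)) ^ b
      = Complex.exp ((((a:ℂ) - b) * I) * θ) := by
    intro θ
    rw [← Complex.exp_nat_mul, ← Complex.exp_nat_mul, ← Complex.exp_add]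
    congr 1
    ring
  simp only [hrw]
  rcases eq_or_ne a b with rfl | hab
  · simp only [sub_self, zero_mul, Complex.exp_zero]
    rw [setIntegral_const]
    rw [measureReal_def, Real.volume_Ioo]
    rw [ENNReal.toReal_ofReal (by linarith [Real.pi_pos] : (0:ℝ) ≤ π - -π)]
    rw [Complex.real_smul, mul_one]
    push_cast
    ring
  · simp only [if_neg hab]
    have hc : ((a:ℂ) - b) * I ≠ 0 := by
      apply mul_ne_zero _ Complex.I_ne_zero
      rw [sub_ne_zero]
      exact_mod_cast fun h => hab (by exact_mod_cast h)
    rw [← integral_Ioc_eq_integral_Ioo,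
      ← intervalIntegral.integral_of_le (by linarith [Real.pi_pos] : -π ≤ π)]
    rw [integral_exp_mul_complex hc]
    have he1 : ((a:ℂ) - b) * I * π = ((((a : ℤ) - b) : ℤ) : ℂ) * (π * I) := by
      push_cast; ring
    have he2 : ((a:ℂ) - b) * I * ((-π : ℝ) : ℂ) = ((((b : ℤ) - a) : ℤ) : ℂ) * (π * I) := by
      push_cast; ring
    rw [he1, he2, Complex.exp_int_mul, Complex.exp_int_mul, Complex.exp_pi_mul_I]
    have hsq : ((-1:ℂ)) ^ ((a : ℤ) - b) * ((-1:ℂ)) ^ ((a : ℤ) - b) = 1 := by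
      rw [← zpow_add₀ (by norm_num : (-1:ℂ) ≠ 0), ← two_mul, zpow_mul]
      norm_num
    rw [show ((b : ℤ) - a) = -((a : ℤ) - b) by ring, zpow_neg,
      inv_eq_of_mul_eq_one_right hsq, sub_self, zero_div]

lemma Fc_integral (hℏ : 0 < ℏ) (a b : ℕ) :
    ∫ x : ℂ, Fc ℏ a b x
      = if a = b then (((π * ∫ t in Ioi (0:ℝ), t ^ a * hh ℏ t : ℝ)) : ℂ) else 0 := by
  rw [← Complex.integral_comp_polarCoord_symm]
  have heq : (fun p : ℝ × ℝ => p.1 • Fc ℏ a b (Complex.polarCoord.symm p))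
      = fun p : ℝ × ℝ => ((p.1 : ℂ) ^ (a + b + 1) * ((hh ℏ (p.1 ^ 2) : ℝ) : ℂ))
          * (Complex.exp (p.2 * I) ^ a * Complex.exp (-(p.2 * I)) ^ b) :=
    funext (polar_eq a b)
  show (∫ p in polarCoord.target, p.1 • Fc ℏ a b (Complex.polarCoord.symm p)) = _
  rw [heq]
  have htarget : polarCoord.target = Ioi (0:ℝ) ×ˢ Ioo (-π) π := rfl
  rw [htarget, Measure.volume_eq_prod, ← Measure.prod_restrict]
  rw [MeasureTheory.integral_prod_mul
    (f := fun r : ℝ => (r : ℂ) ^ (a + b + 1) * ((hh ℏ (r ^ 2) : ℝ) : ℂ))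
    (g := fun θ : ℝ => Complex.exp (θ * I) ^ a * Complex.exp (-(θ * I)) ^ b)]
  rw [angular_val a b]
  rcases eq_or_ne a b with rfl | hab
  · simp only [if_pos rfl]
    have hre : (fun r : ℝ => (r : ℂ) ^ (a + a + 1) * ((hh ℏ (r ^ 2) : ℝ) : ℂ))
        = fun r : ℝ => ((r ^ (2 * a + 1) * hh ℏ (r ^ 2) : ℝ) : ℂ) := by
      funext r
      push_cast
      rw [show a + a + 1 = 2 * a + 1 by ring]
    rw [hre]
    have hofr : (∫ r in Ioi (0:ℝ), ((r ^ (2 * a + 1) * hh ℏ (r ^ 2) : ℝ) : ℂ))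
        = (((∫ r in Ioi (0:ℝ), r ^ (2 * a + 1) * hh ℏ (r ^ 2) : ℝ)) : ℂ) :=
      integral_ofReal
    rw [hofr, radial_val hℏ a]
    simp only [if_true]
    push_cast
    ring
  · simp only [if_neg hab, mul_zero]

lemma integrand_eq (hℏ : ℏ ≠ 0) (m n m' n' : ℕ) (p : ℂ × ℂ) :
    (starRingEnd ℂ) (sg ℏ m n p) * sg ℏ m' n' p * ((wt p : ℝ) : ℂ)
      = Fc ℏ m m' p.1 * Fc ℏ n' n p.2 := by
  set A := Li2 (-(normSq p.1)) with hA
  set B := Li2 (-(normSq p.2)) with hB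
  have hreal : Real.exp ((A + B) / (2 * ℏ)) * Real.exp ((A + B) / (2 * ℏ))
      * (1 / (Real.sqrt (1 + normSq p.1) * Real.sqrt (1 + normSq p.2)))
      = (Real.exp (A / ℏ) / Real.sqrt (1 + normSq p.1))
        * (Real.exp (B / ℏ) / Real.sqrt (1 + normSq p.2)) := by
    rw [← Real.exp_add, show (A + B) / (2 * ℏ) + (A + B) / (2 * ℏ) = A / ℏ + B / ℏ by
      field_simp; ring, Real.exp_add]
    ring
  have hc : ((Real.exp ((A + B) / (2 * ℏ)) : ℝ) : ℂ) * ((Real.exp ((A + B) / (2 * ℏ)) : ℝ) : ℂ)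
      * (((1 / (Real.sqrt (1 + normSq p.1) * Real.sqrt (1 + normSq p.2)) : ℝ)) : ℂ)
      = (((Real.exp (A / ℏ) / Real.sqrt (1 + normSq p.1) : ℝ)) : ℂ)
        * (((Real.exp (B / ℏ) / Real.sqrt (1 + normSq p.2) : ℝ)) : ℂ) := by
    exact_mod_cast congrArg (fun x : ℝ => (x : ℂ)) hreal
  unfold sg wt Fc hh
  simp only [← hA, ← hB, ← Complex.ofReal_exp, map_mul, map_pow, Complex.conj_conj,
    Complex.conj_ofReal]
  linear_combination (p.1 ^ m * ((starRingEnd ℂ) p.1) ^ m' * p.2 ^ n'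
    * ((starRingEnd ℂ) p.2) ^ n) * hc

lemma ip_val (hℏ : 0 < ℏ) (m n m' n' : ℕ) :
    ip ℏ m n m' n' = 4 * (∫ x : ℂ, Fc ℏ m m' x) * (∫ y : ℂ, Fc ℏ n' n y) := by
  unfold ip
  have heq : (fun p : ℂ × ℂ => (starRingEnd ℂ) (sg ℏ m n p) * sg ℏ m' n' p * ((wt p : ℝ) : ℂ))
      = fun p : ℂ × ℂ => Fc ℏ m m' p.1 * Fc ℏ n' n p.2 :=
    funext (integrand_eq hℏ.ne' m n m' n')
  rw [heq]
  unfold meas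
  rw [integral_smul_measure]
  rw [Measure.volume_eq_prod]
  rw [MeasureTheory.integral_prod_mul (f := Fc ℏ m m') (g := Fc ℏ n' n)]
  rw [show ((4:ℝ≥0∞)).toReal = (4:ℝ) by simp]
  rw [Complex.real_smul]
  push_cast
  ring


/-- the states `σ_{m,n}` are pairwise orthogonal and have finite norm
`‖σ_{m,n}‖² = A_m A_n`, with `A_m < ∞`. -/
theorem stmt17 (ℏ : ℝ) (hℏ : 0 < ℏ) (m n m' n' : ℕ) :
    ((m, n) ≠ (m', n') → ip ℏ m n m' n' = 0) ∧
    IntegrableOn (fun t : ℝ => t ^ m / Real.sqrt (1 + t) * Real.exp (Li2 (-t) / ℏ))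
      (Set.Ioi 0) ∧
    Integrable (fun p : ℂ × ℂ => (starRingEnd ℂ) (sg ℏ m n p) * sg ℏ m n p * (wt p : ℂ))
      meas ∧
    ip ℏ m n m n = ((Acoef ℏ m * Acoef ℏ n : ℝ) : ℂ) := by
  refine ⟨?_, radial_int hℏ m, ?_, ?_⟩
  · intro hne
    rw [ip_val hℏ, Fc_integral hℏ, Fc_integral hℏ]
    by_cases hm : m = m'
    · have hn : n' ≠ n := by
        intro h'; exact hne (by rw [hm, h'])
      rw [if_neg hn]
      ring
    · rw [if_neg hm]
      ring
  · have heq : (fun p : ℂ × ℂ => (starRingEnd ℂ) (sg ℏ m n p) * sg ℏ m n p * ((wt p : ℝ) : ℂ))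
        = fun p : ℂ × ℂ => Fc ℏ m m p.1 * Fc ℏ n n p.2 :=
      funext (integrand_eq hℏ.ne' m n m n)
    rw [heq]
    unfold meas
    apply Integrable.smul_measure _ (by norm_num : (4:ℝ≥0∞) ≠ ⊤)
    rw [Measure.volume_eq_prod]
    exact Integrable.mul_prod (Fc_integrable hℏ m m) (Fc_integrable hℏ n n)
  · rw [ip_val hℏ, Fc_integral hℏ, Fc_integral hℏ, if_pos rfl, if_pos rfl]
    unfold Acoef
    have hcong : ∀ k : ℕ, (∫ t in Ioi (0:ℝ), t ^ k * hh ℏ t)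
        = ∫ t in Ioi (0:ℝ), t ^ k / Real.sqrt (1 + t) * Real.exp (Li2 (-t) / ℏ) := by
      intro k
      apply setIntegral_congr_fun measurableSet_Ioi
      intro t _
      unfold hh; ring
    rw [← hcong m, ← hcong n]
    push_cast
    ring

end
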